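/- Let $F_\theta$, $\bar\xi$, $\Pi$, $\Gamma$, $\Sigma$ be as in the parameter-sensitivity lemma (with $\Pi, \Sigma$ invertible), let $C$ be a differentiable real cost function of $\xi_{\mathrm{out}}$, and suppose the exact symmetry $\big(\nabla_\xi F_{\theta_0}(\bar\xi)^{-1}\big)^\dagger = U_1\, \nabla_\xi F_{\theta_0}(\bar\xi)^{-1}\, U_2$ holds for invertible matrices $U_1, U_2$. Define the injected error signal $\delta\xi_{\mathrm{in}} := \beta\,\Pi^{-1} U_2 \Sigma^\dagger\,\overline{\nabla C(\xi_{\mathrm{out}})}$ for $\beta > 0$, and let $\delta\xi_{\mathrm{out}}^{\mathrm{lin}} := S(\bar\xi)\,\delta\xi_{\mathrm{in}}$ with $S(\bar\xi) = \Gamma + \Sigma\nabla_\xi F_{\theta_0}(\bar\xi)^{-1}\Pi$ denote the linear response. Then the exact gradient satisfies $\frac{\partial (C\circ\xi_{\mathrm{out}})}{\partial\theta}(\theta_0) = -\Big(\frac{\partial F_\theta}{\partial\theta}(\bar\xi)\Big)^\dagger U_1\,\Sigma^{-1}\,\frac{\delta\xi_{\mathrm{out}}^{\mathrm{lin}} -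 \Gamma\,\delta\xi_{\mathrm{in}}}{\beta}$. -/
import Mathlib


open Matrix

/-- Exact-symmetry version of the Scattering Backpropagation gradient formula.
With `W = (∇_ξ F)⁻¹ = Jm⁻¹` satisfying `Wᴴ = U₁ W U₂`, cost gradient
`gvec = ∂C/∂ξ*_out`, per-parameter derivatives `Fj j = ∂F/∂θ_j`, injected error
signal `δξ_in = β Π⁻¹ U₂ Σᴴ gvec` and linear response
`δξ_out = (Γ + Σ W Π) δξ_in`, the exact gradient
`∂_θ C = (∂ξ_out/∂θ)ᴴ (∂C/∂ξ_out)* = (-(Σ W) Fj)ᴴ ⬝ gvec` equals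
`-(Fj)ᴴ U₁ Σ⁻¹ (δξ_out - Γ δξ_in)/β`. -/
theorem stmt_19 {m p : ℕ} (G Pm Sm Jm U₁ U₂ : Matrix (Fin m) (Fin m) ℂ)
    (gvec : Fin m → ℂ) (Fj : Fin p → (Fin m → ℂ)) (β : ℝ)
    (hPm : IsUnit Pm) (hSm : IsUnit Sm) (hJm : IsUnit Jm)
    (hU₁ : IsUnit U₁) (hU₂ : IsUnit U₂) (hβ : 0 < β)
    (hsym : (Jm⁻¹)ᴴ = U₁ * Jm⁻¹ * U₂) :
    ∀ j : Fin p,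
      star ((-(Sm * Jm⁻¹)).mulVec (Fj j)) ⬝ᵥ gvec =
        -(star (Fj j) ⬝ᵥ (U₁ * Sm⁻¹).mulVec
            ((β : ℂ)⁻¹ •
              ((G + Sm * Jm⁻¹ * Pm).mulVec
                  ((β : ℂ) • ((Pm⁻¹ * U₂ * Smᴴ).mulVec gvec)) -
                G.mulVec ((β : ℂ) • ((Pm⁻¹ * U₂ * Smᴴ).mulVec gvec))))) := by
  intro j
  have hβ' : (β : ℂ) ≠ 0 := by exact_mod_cast hβ.ne'
  have hSinv : Sm⁻¹ * Sm = 1 :=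
    Matrix.nonsing_inv_mul Sm ((Matrix.isUnit_iff_isUnit_det Sm).mp hSm)
  have hPinv : Pm * Pm⁻¹ = 1 :=
    Matrix.mul_nonsing_inv Pm ((Matrix.isUnit_iff_isUnit_det Pm).mp hPm)
  set w := (Pm⁻¹ * U₂ * Smᴴ).mulVec gvec with hw
  have hv : (β : ℂ)⁻¹ •
      ((G + Sm * Jm⁻¹ * Pm).mulVec ((β : ℂ) • w) - G.mulVec ((β : ℂ) • w))
      = (Sm * Jm⁻¹ * Pm).mulVec w := by
    rw [Matrix.add_mulVec, Matrix.mulVec_smul, Matrix.mulVec_smul,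
      add_sub_cancel_left, smul_smul,
      inv_mul_cancel₀ hβ', one_smul]
  rw [hv, hw, Matrix.mulVec_mulVec, Matrix.mulVec_mulVec]
  have hM : U₁ * Sm⁻¹ * (Sm * Jm⁻¹ * Pm) * (Pm⁻¹ * U₂ * Smᴴ)
      = (Sm * Jm⁻¹)ᴴ := by
    rw [Matrix.conjTranspose_mul, hsym]
    calc U₁ * Sm⁻¹ * (Sm * Jm⁻¹ * Pm) * (Pm⁻¹ * U₂ * Smᴴ)
        = U₁ * (Sm⁻¹ * Sm) * Jm⁻¹ * (Pm * Pm⁻¹) * (U₂ * Smᴴ) := by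
          simp only [Matrix.mul_assoc]
      _ = U₁ * Jm⁻¹ * U₂ * Smᴴ := by
          rw [hSinv, hPinv, Matrix.mul_one, Matrix.mul_one]
          simp only [Matrix.mul_assoc]
  rw [hM, Matrix.neg_mulVec, star_neg, neg_dotProduct,
    Matrix.star_mulVec, Matrix.dotProduct_mulVec]
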